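/- Let C be a category with a terminal object ⊤, equipped with a comonad (T, ε, δ), let D be the co-Kleisli category of T, and let J : C → D be the canonical identity-on-objects functor induced by the comonadic adjunction (⊤ is also a terminal object of D). If the underlying endofunctor of T has a bifree algebra, then D has exactly one fixpoint operator uniform with respect to J: such an operator exists, and any two fixpoint operators on D uniform with respect to J are equal (i.e. they assign the same morphism ⊤ ⟶ A to every endomorphism of every object A of D). -/

import Mathlib

open CategoryTheory CategoryTheory.Limits

namespace PlotkinSimpsonAux

variable {C : Type*} [Category C] (T : Comonad C)

lemma cok_comp_def {X Y Z : Cokleisli T} (f : X ⟶ Y) (g : Y ⟶ Z) :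
    (f ≫ g).of = T.δ.app X.of ≫ (T : C ⥤ C).map f.of ≫ g.of := rfl

lemma comp_J {X Y : Cokleisli T} {Z : C} (f : X ⟶ Y) (s : Y.of ⟶ Z) :
    (f ≫ (Cokleisli.Adjunction.toCokleisli T).map s).of = f.of ≫ s := by
  show T.δ.app X.of ≫ (T : C ⥤ C).map f.of ≫ (T.ε.app Y.of ≫ s) = f.of ≫ s
  rw [← Category.assoc ((T : C ⥤ C).map f.of), T.ε.naturality]
  simp

lemma J_comp {X : C} {Y Z : Cokleisli T} (s : X ⟶ Y.of) (g : Y ⟶ Z) :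
    ((Cokleisli.Adjunction.toCokleisli T).map s ≫ g).of = (T : C ⥤ C).map s ≫ g.of := by
  show T.δ.app X ≫ (T : C ⥤ C).map (T.ε.app X ≫ s) ≫ g.of = (T : C ⥤ C).map s ≫ g.of
  simp

end PlotkinSimpsonAux

/-- A bifree algebra for an endofunctor `T : C ⥤ C`: an algebra `(V, a)` that is initial
among `T`-algebras, whose structure map `a` is an isomorphism, and such that the coalgebra
`(V, a⁻¹)` is terminal among `T`-coalgebras. -/
def IsBifreeAlgebra {C : Type*} [Category C] (T : C ⥤ C) (V : C) (a : T.obj V ⟶ V) : Prop :=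
  Nonempty (IsInitial (Endofunctor.Algebra.mk V a : Endofunctor.Algebra T)) ∧
  ∃ hiso : IsIso a,
    Nonempty (IsTerminal
      (Endofunctor.Coalgebra.mk V (@inv _ _ _ _ a hiso) : Endofunctor.Coalgebra T))

/-- Plotkin–Simpson, part 1: if the underlying endofunctor of a comonad `T` on a category `C`
with a terminal object has a bifree algebra, then the co-Kleisli category of `T` has exactly
one fixpoint operator uniform with respect to the canonical functor `J : C → Cokleisli T`. -/
theorem unique_uniform_fixpoint_of_bifree
    {C : Type*} [Category C] [HasTerminal C] (T : Comonad C)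
    (V : C) (a : (T : C ⥤ C).obj V ⟶ V)
    (hbifree : IsBifreeAlgebra (T : C ⥤ C) V a) :
    ∃! fix : ∀ A : Cokleisli T, (A ⟶ A) → ((Cokleisli.mk T (⊤_ C)) ⟶ A),
      (∀ (A : Cokleisli T) (f : A ⟶ A), fix A f ≫ f = fix A f) ∧
      (∀ (A B : Cokleisli T) (s : A.of ⟶ B.of)
        (f : A ⟶ A) (g : B ⟶ B),
        f ≫ (Cokleisli.Adjunction.toCokleisli T).map s =
          (Cokleisli.Adjunction.toCokleisli T).map s ≫ g →
        fix A f ≫ (Cokleisli.Adjunction.toCokleisli T).map s = fix B g) := by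
  open PlotkinSimpsonAux in
  obtain ⟨⟨hinit⟩, hiso, ⟨hterm⟩⟩ := hbifree
  -- for f : T A ⟶ A in C, (A, f) is a T-algebra; h A f : V ⟶ A the unique algebra morphism
  let alg : ∀ (A : C) (_ : (T : C ⥤ C).obj A ⟶ A), Endofunctor.Algebra (T : C ⥤ C) :=
    fun A f => Endofunctor.Algebra.mk A f
  let h : ∀ (A : C) (_ : (T : C ⥤ C).obj A ⟶ A), V ⟶ A :=
    fun A f => (hinit.to (alg A f)).f
  have hcomm : ∀ (A : C) (f : (T : C ⥤ C).obj A ⟶ A),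
      (T : C ⥤ C).map (h A f) ≫ f = a ≫ h A f :=
    fun A f => (hinit.to (alg A f)).h
  -- the unique coalgebra morphism from (T ⊤, δ_⊤) to (V, a⁻¹)
  let coalgTop : Endofunctor.Coalgebra (T : C ⥤ C) :=
    Endofunctor.Coalgebra.mk ((T : C ⥤ C).obj (⊤_ C)) (T.δ.app (⊤_ C))
  let k : (T : C ⥤ C).obj (⊤_ C) ⟶ V := (hterm.from coalgTop).f
  have hk : T.δ.app (⊤_ C) ≫ (T : C ⥤ C).map k = k ≫ @inv _ _ _ _ a hiso :=
    (hterm.from coalgTop).h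
  have hk' : T.δ.app (⊤_ C) ≫ (T : C ⥤ C).map k ≫ a = k := by
    rw [← Category.assoc, hk, Category.assoc, IsIso.inv_hom_id, Category.comp_id]
  -- if s is an algebra morphism (A,f) → (B,g), then h B g = h A f ≫ s
  have hnat : ∀ (A B : C) (s : A ⟶ B) (f : (T : C ⥤ C).obj A ⟶ A)
      (g : (T : C ⥤ C).obj B ⟶ B),
      f ≫ s = (T : C ⥤ C).map s ≫ g → h B g = h A f ≫ s := by
    intro A B s f g hs
    have heq : hinit.to (alg B g) =
        hinit.to (alg A f) ≫ Endofunctor.Algebra.Hom.mk s hs.symm :=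
      hinit.hom_ext _ _
    have := congrArg Endofunctor.Algebra.Hom.f heq
    rw [Endofunctor.Algebra.comp_f] at this
    exact this
  refine ⟨fun A f => Cokleisli.Hom.mk (k ≫ h A.of f.of), ⟨?_, ?_⟩, ?_⟩
  · -- fixpoint property
    intro A f
    apply Cokleisli.hom_ext
    rw [cok_comp_def T]
    show T.δ.app (⊤_ C) ≫ (T : C ⥤ C).map (k ≫ h A.of f.of) ≫ f.of = k ≫ h A.of f.of
    rw [Functor.map_comp, Category.assoc, hcomm, ← Category.assoc, ← Category.assoc]
    rw [Category.assoc (T.δ.app (⊤_ C)), hk']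
  · -- uniformity
    intro A B s f g hsq
    have hsq' := congrArg Cokleisli.Hom.of hsq
    rw [comp_J T, J_comp T] at hsq'
    apply Cokleisli.hom_ext
    rw [comp_J T]
    show (k ≫ h A.of f.of) ≫ s = k ≫ h B.of g.of
    rw [Category.assoc, ← hnat A.of B.of s f.of g.of hsq']
  · -- uniqueness
    intro fix' ⟨hfp, hunif⟩
    funext A f
    apply Cokleisli.hom_ext
    let V' : Cokleisli T := Cokleisli.mk T V
    let aV : V' ⟶ V' := Cokleisli.Hom.mk a
    -- fix' V a = k, by terminality of the coalgebra (V, a⁻¹)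
    have hVa : (fix' V' aV).of = k := by
      have hfpa := congrArg Cokleisli.Hom.of (hfp V' aV)
      rw [cok_comp_def T] at hfpa
      set x : (T : C ⥤ C).obj (⊤_ C) ⟶ V := (fix' V' aV).of with hx
      have hfpa' : T.δ.app (⊤_ C) ≫ (T : C ⥤ C).map x ≫ a = x := hfpa
      have hxcoalg : T.δ.app (⊤_ C) ≫ (T : C ⥤ C).map x = x ≫ @inv _ _ _ _ a hiso := by
        rw [IsIso.eq_comp_inv, Category.assoc]
        exact hfpa'
      have heq : hterm.from coalgTop =
          Endofunctor.Coalgebra.Hom.mk (V₀ := coalgTop) x hxcoalg := hterm.hom_ext _ _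
      have := congrArg Endofunctor.Coalgebra.Hom.f heq
      exact this.symm
    -- uniformity along h A f : V ⟶ A
    have hsq : aV ≫ (Cokleisli.Adjunction.toCokleisli T).map (h A.of f.of) =
        (Cokleisli.Adjunction.toCokleisli T).map (h A.of f.of) ≫ f := by
      apply Cokleisli.hom_ext
      rw [comp_J T, J_comp T]
      exact (hcomm A.of f.of).symm
    have hu := congrArg Cokleisli.Hom.of (hunif V' A (h A.of f.of) aV f hsq)
    rw [comp_J T, hVa] at hu
    exact hu.symm
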